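/- Let G=(V,E) be a locally finite graph and let v be a vertex of G. Then for every p ∈ [0,1) and all integers n ≥ m ≥ 0, P_p(R_v ≥ m and E_v ≤ n) ≤ exp[−(1/2)(1−p)^{4n/m} m], where R_v is the intrinsic radius of the cluster of v, i.e. the maximal graph distance within K_v from v to a vertex of K_v. -/

import Mathlib

open MeasureTheory Filter Set
open scoped ENNReal

namespace Percolation

variable {V : Type*}

/-- The graph spanned by the open edges of a configuration `ω : Sym2 V → Bool`. -/
def openGraph (G : SimpleGraph V) (ω : Sym2 V → Bool) : SimpleGraph V where
  Adj u w := G.Adj u w ∧ ω s(u, w) = true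
  symm := by
    constructor
    intro u w h
    exact ⟨h.1.symm, by rw [Sym2.eq_swap]; exact h.2⟩
  loopless := ⟨fun u h => G.loopless.1 u h.1⟩

/-- The open cluster of the vertex `v` in the configuration `ω`. -/
def cluster (G : SimpleGraph V) (ω : Sym2 V → Bool) (v : V) : Set V :=
  {u | (openGraph G ω).Reachable v u}

/-- The set `E(S)` of edges of `G` with at least one endpoint in `S`. -/
def touchingEdges (G : SimpleGraph V) (S : Set V) : Set (Sym2 V) :=
  {e | e ∈ G.edgeSet ∧ ∃ u ∈ S, u ∈ e}

/-- The set `E(K_v)` of edges of `G` with at least one endpoint in the cluster of `v`. -/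
def clusterEdges (G : SimpleGraph V) (ω : Sym2 V → Bool) (v : V) : Set (Sym2 V) :=
  touchingEdges G (cluster G ω v)

/-- `μ` is the law of Bernoulli-`p` bond percolation on `G`: it is a probability measure on
configurations under which the states of the edges of `G` are independent, each edge being
open with probability `p`.  (This characterizes `μ` on all events depending only on the states
of the edges of `G`.) -/
def IsBernoulli (G : SimpleGraph V) (p : ℝ) (μ : Measure (Sym2 V → Bool)) : Prop :=
  IsProbabilityMeasure μ ∧
    ∀ s : Finset (Sym2 V), ↑s ⊆ G.edgeSet → ∀ f : Sym2 V → Bool,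
      μ {ω | ∀ e ∈ s, ω e = f e} =
        ENNReal.ofReal (p ^ (s.filter fun e => f e = true).card *
          (1 - p) ^ (s.filter fun e => f e = false).card)

/-- The critical probability of `G`. -/
noncomputable def pc (G : SimpleGraph V) : ℝ :=
  sInf {p : ℝ | 0 ≤ p ∧ p ≤ 1 ∧
    ∀ μ : Measure (Sym2 V → Bool), IsBernoulli G p μ →
      μ {ω | ∃ u : V, (cluster G ω u).Infinite} = 1}

/-- `ζ(p) = -limsup (1/n) log P_p(n ≤ E_v < ∞)`, where `μ` is Bernoulli-`p` percolation. -/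
noncomputable def zeta (G : SimpleGraph V) (v : V) (μ : Measure (Sym2 V → Bool)) : ℝ :=
  - Filter.limsup (fun n : ℕ =>
      Real.log (μ {ω | (n : ℕ∞) ≤ (clusterEdges G ω v).encard ∧
        (clusterEdges G ω v).encard < ⊤}).toReal / (n : ℝ)) Filter.atTop

/-- A graph is (vertex-)transitive if its automorphism group acts transitively. -/
def IsTransitive (G : SimpleGraph V) : Prop :=
  ∀ u w : V, ∃ φ : G ≃g G, φ u = w

/-- A graph is quasi-transitive if its automorphism group has finitely many vertex orbits. -/
def IsQuasiTransitive (G : SimpleGraph V) : Prop :=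
  ∃ S : Finset V, ∀ u : V, ∃ φ : G ≃g G, φ u ∈ S

/-- The volume `∑_{u ∈ K} deg(u)` of a set of vertices. -/
noncomputable def vol (G : SimpleGraph V) (K : Set V) : ℝ :=
  ∑ᶠ u ∈ K, ((G.neighborSet u).ncard : ℝ)

/-- The edge boundary `∂_E K`: edges with exactly one endpoint in `K`. -/
def edgeBoundary (G : SimpleGraph V) (K : Set V) : Set (Sym2 V) :=
  {e | e ∈ G.edgeSet ∧ ∃ u w : V, e = s(u, w) ∧ u ∈ K ∧ w ∉ K}

/-- The Cheeger constant `Φ_E(G)`. -/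
noncomputable def cheeger (G : SimpleGraph V) : ℝ :=
  sInf {r : ℝ | ∃ K : Set V, K.Finite ∧ K.Nonempty ∧
    r = ((edgeBoundary G K).ncard : ℝ) / vol G K}

/-- A graph is nonamenable if its Cheeger constant is positive. -/
def Nonamenable (G : SimpleGraph V) : Prop := 0 < cheeger G

/-- The anchored Cheeger constant `Φ*_E` of (the component of `v` in) `H`, anchored at `v`. -/
noncomputable def anchoredCheeger (H : SimpleGraph V) (v : V) : ℝ :=
  ⨆ n : ℕ, sInf {r : ℝ | ∃ K : Set V, v ∈ K ∧ K.Finite ∧ n ≤ K.ncard ∧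
    (SimpleGraph.induce K H).Connected ∧
    r = ((edgeBoundary H K).ncard : ℝ) / vol H K}

/-- The cluster of `v`, viewed as a subgraph of `G`. -/
def clusterSubgraph (G : SimpleGraph V) (ω : Sym2 V → Bool) (v : V) : G.Subgraph where
  verts := cluster G ω v
  Adj u w := (openGraph G ω).Adj u w ∧ u ∈ cluster G ω v ∧ w ∈ cluster G ω v
  adj_sub h := h.1.1
  edge_vert h := h.2.1
  symm := ⟨fun u w h => ⟨h.1.symm, h.2.2, h.2.1⟩⟩

/-- Membership in `𝓗_v`: finite connected subgraphs of `G` containing `v`. -/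
def HSetMem (G : SimpleGraph V) (v : V) (H : G.Subgraph) : Prop :=
  v ∈ H.verts ∧ H.verts.Finite ∧ H.Connected

/-- `F : 𝓗_v → ℂ` has subexponential growth:
`limsup (1/n) log sup {|F(H)| : H ∈ 𝓗_v, |E(H)| ≤ n} ≤ 0`. -/
def SubexpGrowth (G : SimpleGraph V) (v : V) (F : G.Subgraph → ℂ) : Prop :=
  Filter.limsup (fun n : ℕ =>
    Real.log (sSup {r : ℝ | ∃ H : G.Subgraph, HSetMem G v H ∧
      (touchingEdges G H.verts).ncard ≤ n ∧ r = ‖F H‖}) / (n : ℝ))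
    Filter.atTop ≤ 0

-- The configuration `ω` with the edge `e` opened, i.e. `ω^e`.
open Classical in
noncomputable def updOpen (ω : Sym2 V → Bool) (e : Sym2 V) : Sym2 V → Bool :=
  fun e' => if e' = e then true else ω e'

/-- The fluctuation `h_p(K_v) = p|∂K_v| - (1-p)|E_o(K_v)|` of the cluster of `v`. -/
noncomputable def fluct (G : SimpleGraph V) (p : ℝ) (ω : Sym2 V → Bool) (v : V) : ℝ :=
  p * ({e | e ∈ clusterEdges G ω v ∧ ω e = false}.ncard : ℝ) -
    (1 - p) * ({e | e ∈ clusterEdges G ω v ∧ ω e = true}.ncard : ℝ)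

/-- `Piv(H,v,W)`: edges of `H` whose deletion disconnects `v` from some vertex of `W`. -/
def Piv (H : SimpleGraph V) (v : V) (W : Set V) : Set (Sym2 V) :=
  {e | e ∈ H.edgeSet ∧ ∃ w ∈ W, ¬ (H.deleteEdges {e}).Reachable v w}

/-- `Br_k(K_v, v) = max {|Piv(K_v,v,W)| : W ⊆ K_v, |W| ≤ k}`. -/
noncomputable def Br (G : SimpleGraph V) (ω : Sym2 V → Bool) (v : V) (k : ℕ) : ℕ :=
  sSup {m : ℕ | ∃ W : Finset V, ↑W ⊆ cluster G ω v ∧ W.card ≤ k ∧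
    m = (Piv (openGraph G ω) v ↑W).ncard}

/-- `𝒫_ω(S → ∞)`: the minimal number of edges whose removal disconnects `S` from infinity
in the open subgraph of `ω`. -/
noncomputable def minCut (G : SimpleGraph V) (ω : Sym2 V → Bool) (S : Set V) : ℕ∞ :=
  ⨅ C ∈ {C : Set (Sym2 V) |
    ∀ s ∈ S, {u | ((openGraph G ω).deleteEdges C).Reachable s u}.Finite}, C.encard

/-- `v` is a furcation of `ω`: closing all edges incident to `v` splits the cluster of `v`
into at least three distinct infinite connected components. -/
def IsFurcation (G : SimpleGraph V) (ω : Sym2 V → Bool) (v : V) : Prop :=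
  ∃ u1 u2 u3 : V,
    (openGraph G ω).Adj v u1 ∧ (openGraph G ω).Adj v u2 ∧ (openGraph G ω).Adj v u3 ∧
    ¬ ((openGraph G ω).deleteEdges {e | v ∈ e}).Reachable u1 u2 ∧
    ¬ ((openGraph G ω).deleteEdges {e | v ∈ e}).Reachable u1 u3 ∧
    ¬ ((openGraph G ω).deleteEdges {e | v ∈ e}).Reachable u2 u3 ∧
    {x | ((openGraph G ω).deleteEdges {e | v ∈ e}).Reachable u1 x}.Infinite ∧
    {x | ((openGraph G ω).deleteEdges {e | v ∈ e}).Reachable u2 x}.Infinite ∧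
    {x | ((openGraph G ω).deleteEdges {e | v ∈ e}).Reachable u3 x}.Infinite

-- The `n`-step transition probability of simple random walk on the graph `H`.
open Classical in
noncomputable def walkProb (H : SimpleGraph V) : ℕ → V → V → ℝ
  | 0, u, w => if u = w then 1 else 0
  | n + 1, u, w => ∑ᶠ x ∈ H.neighborSet u, walkProb H n x w / ((H.neighborSet u).ncard : ℝ)

/-- Two vertices are `2`-connected in `H` if they are joined by two edge-disjoint paths. -/
def TwoConn (H : SimpleGraph V) (u w : V) : Prop :=
  ∃ p1 p2 : H.Walk u w, p1.IsPath ∧ p2.IsPath ∧ ∀ e ∈ p1.edges, e ∉ p2.edges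

/-- An edge of `H` is a bridge if deleting it disconnects its endpoints. -/
def IsBridgeOf (H : SimpleGraph V) (e : Sym2 V) : Prop :=
  e ∈ H.edgeSet ∧ ∃ u w : V, e = s(u, w) ∧ ¬ (H.deleteEdges {e}).Reachable u w

/-- `w` represents a leaf of the tree `Tr(K_v)` of `2`-connected components of the cluster of
`v`: it lies in the cluster, its `2`-connected component differs from that of `v`, and exactly
one bridge is incident to its `2`-connected component. -/
def IsTrLeaf (G : SimpleGraph V) (ω : Sym2 V → Bool) (v w : V) : Prop :=
  w ∈ cluster G ω v ∧ ¬ TwoConn (openGraph G ω) v w ∧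
    {e : Sym2 V | IsBridgeOf (openGraph G ω) e ∧
      ∃ x ∈ e, TwoConn (openGraph G ω) x w}.encard = 1

/-- `Lf_k(K_v, v)`: the maximum number of edges in a subgraph of `Tr(K_v)` spanned by the
union of the geodesics between the `2`-connected component of `v` and exactly `k` leaves
(`0` if `Tr(K_v)` has fewer than `k` leaves).  The tree edges of such a spanned subgraph are
exactly the bridges separating `v` from one of the chosen leaf representatives. -/
noncomputable def Lf (G : SimpleGraph V) (ω : Sym2 V → Bool) (v : V) (k : ℕ) : ℕ :=
  sSup {m : ℕ | ∃ w : Fin k → V, (∀ i, IsTrLeaf G ω v (w i)) ∧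
    (∀ i j : Fin k, i ≠ j → ¬ TwoConn (openGraph G ω) (w i) (w j)) ∧
    m = (⋃ i, Piv (openGraph G ω) v {w i}).ncard}

/-- `Q_k(p,n,m)`: the supremum over all countable locally finite graphs `G` and vertices `v`
of `P_p(Lf_k(K_v,v) = m and E_v = n)`. -/
noncomputable def Qk (k : ℕ) (p : ℝ) (n m : ℕ) : ℝ :=
  sSup {r : ℝ | ∃ (W : Type) (_ : Countable W) (G : SimpleGraph W) (v : W),
    (∀ u : W, (G.neighborSet u).Finite) ∧
    ∃ μ : Measure (Sym2 W → Bool), IsBernoulli G p μ ∧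
      r = (μ {ω | Lf G ω v k = m ∧ (clusterEdges G ω v).encard = (n : ℕ∞)}).toReal}

/-- `α(p) = sup {α ∈ [0,p] : α^{-α} (1-α)^{-(1-α)} (p/(1-p))^α < e^{ζ(p)}}`. -/
noncomputable def alphaP (G : SimpleGraph V) (v : V) (p : ℝ)
    (μ : Measure (Sym2 V → Bool)) : ℝ :=
  sSup {α : ℝ | 0 ≤ α ∧ α ≤ p ∧
    α ^ (-α) * (1 - α) ^ (-(1 - α)) * (p / (1 - p)) ^ α < Real.exp (zeta G v μ)}

section Aux
variable (G : SimpleGraph V) (v : V)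

/-- intrinsic ball -/
def ballO (ω : Sym2 V → Bool) (k : ℕ) : Set V :=
  {u | (openGraph G ω).Reachable v u ∧ (openGraph G ω).dist v u ≤ k}

def levelO (ω : Sym2 V → Bool) (k : ℕ) : Set V :=
  {u | (openGraph G ω).Reachable v u ∧ (openGraph G ω).dist v u = k}

/-- escape edges at level k -/
def escS (ω : Sym2 V → Bool) (k : ℕ) : Set (Sym2 V) :=
  {e | ∃ x y, e = s(x, y) ∧ x ∈ levelO G v ω k ∧ y ∉ ballO G v ω k ∧ e ∈ G.edgeSet}

variable {G v}

lemma ballO_mono (ω : Sym2 V → Bool) {k l : ℕ} (h : k ≤ l) : ballO G v ω k ⊆ ballO G v ω l :=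
  fun _ hu => ⟨hu.1, hu.2.trans h⟩

lemma ballO_zero (ω : Sym2 V → Bool) : ballO G v ω 0 = {v} := by
  ext u
  simp only [ballO, mem_setOf_eq, Set.mem_singleton_iff, Nat.le_zero]
  constructor
  · rintro ⟨hr, hd⟩
    exact ((hr.dist_eq_zero_iff).mp hd).symm
  · rintro rfl
    exact ⟨SimpleGraph.Reachable.refl _, by simp [SimpleGraph.dist_self]⟩

lemma walk_split {H : SimpleGraph V} {a b : V} (p : H.Walk a b) :
    ∀ j, j ≤ p.length → ∃ (w : V) (q : H.Walk a w) (q' : H.Walk w b),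
      q.length = j ∧ q'.length = p.length - j := by
  induction p with
  | nil => intro j hj; simp only [SimpleGraph.Walk.length_nil, Nat.le_zero] at hj; subst hj; exact ⟨_, SimpleGraph.Walk.nil, SimpleGraph.Walk.nil, rfl, rfl⟩
  | @cons a c b h q ih =>
    intro j hj
    match j with
    | 0 => exact ⟨a, SimpleGraph.Walk.nil, SimpleGraph.Walk.cons h q, rfl, rfl⟩
    | (j + 1) =>
      obtain ⟨w, q1, q2, h1, h2⟩ := ih j (by simpa [Nat.succ_le_succ_iff] using hj)
      exact ⟨w, SimpleGraph.Walk.cons h q1, q2, by simp [h1], by simpa using h2⟩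

/-- there's a vertex at every intermediate exact distance -/
lemma exists_dist_eq {H : SimpleGraph V} {a b : V} (hr : H.Reachable a b) {j : ℕ}
    (hj : j ≤ H.dist a b) : ∃ w, H.Reachable a w ∧ H.dist a w = j := by
  obtain ⟨p, hp⟩ := hr.exists_walk_length_eq_dist
  obtain ⟨w, q, q', h1, h2⟩ := walk_split p j (by omega)
  refine ⟨w, ⟨q⟩, le_antisymm (h1 ▸ SimpleGraph.dist_le q) ?_⟩
  by_contra hlt
  push_neg at hlt
  obtain ⟨r, hrlen⟩ := (SimpleGraph.Reachable.exists_walk_length_eq_dist ⟨q⟩)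
  have := SimpleGraph.dist_le (r.append q')
  rw [SimpleGraph.Walk.length_append, hrlen, h2, hp] at this
  omega

/-- penultimate: if `dist a b = j+1`, there is `w` with `dist a w = j` (` ≤ j` sufficies) adjacent to b -/
lemma exists_penultimate {H : SimpleGraph V} {a b : V} (hr : H.Reachable a b) {j : ℕ}
    (hd : H.dist a b = j + 1) :
    ∃ w, H.Reachable a w ∧ H.dist a w ≤ j ∧ H.Adj w b := by
  obtain ⟨p, hp⟩ := hr.exists_walk_length_eq_dist
  obtain ⟨w, q, q', h1, h2⟩ := walk_split p j (by omega)
  have hq' : q'.length = 1 := by omega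
  refine ⟨w, ⟨q⟩, h1 ▸ SimpleGraph.dist_le q, ?_⟩
  cases q' with
  | nil => simp at hq'
  | cons h r =>
    cases r with
    | nil => exact h
    | cons h' r' => simp at hq'


lemma mem_ballO_succ {ω : Sym2 V → Bool} {k : ℕ} {u : V} (hu : u ∈ ballO G v ω (k + 1)) :
    u ∈ ballO G v ω k ∨ ∃ w ∈ ballO G v ω k, (openGraph G ω).Adj w u := by
  obtain ⟨hr, hd⟩ := hu
  rcases Nat.lt_or_ge ((openGraph G ω).dist v u) (k + 1) with h | h
  · exact Or.inl ⟨hr, by omega⟩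
  · have hd' : (openGraph G ω).dist v u = k + 1 := le_antisymm hd h
    obtain ⟨w, hrw, hdw, hadj⟩ := exists_penultimate hr hd'
    exact Or.inr ⟨w, ⟨hrw, hdw⟩, hadj⟩

lemma ballO_succ_of_adj {ω : Sym2 V → Bool} {k : ℕ} {w u : V} (hw : w ∈ ballO G v ω k)
    (hadj : (openGraph G ω).Adj w u) : u ∈ ballO G v ω (k + 1) := by
  obtain ⟨p, hp⟩ := hw.1.exists_walk_length_eq_dist
  refine ⟨hw.1.trans ⟨hadj.toWalk⟩, ?_⟩
  have := SimpleGraph.dist_le (p.append hadj.toWalk)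
  simp only [SimpleGraph.Walk.length_append, hp, SimpleGraph.Walk.length_cons,
    SimpleGraph.Walk.length_nil] at this
  have h2 := hw.2
  omega

/-- locality of balls -/
lemma ballO_locality {ω ω' : Sym2 V → Bool} {k : ℕ}
    (h : ∀ e ∈ touchingEdges G (ballO G v ω k), ω e = ω' e) :
    ∀ j, j ≤ k + 1 → ballO G v ω j = ballO G v ω' j := by
  intro j hj
  induction j with
  | zero => rw [ballO_zero, ballO_zero]
  | succ j ih =>
    have hball : ballO G v ω j = ballO G v ω' j := ih (by omega)
    ext u
    constructor
    · intro hu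
      rcases mem_ballO_succ hu with h1 | ⟨w, hw, hadj⟩
      · exact ballO_mono ω' (Nat.le_succ j) (hball ▸ h1)
      · have he : s(w, u) ∈ touchingEdges G (ballO G v ω k) :=
          ⟨hadj.1, w, ballO_mono ω (by omega) hw, by simp⟩
        have hadj' : (openGraph G ω').Adj w u := ⟨hadj.1, (h _ he) ▸ hadj.2⟩
        exact ballO_succ_of_adj (hball ▸ hw) hadj'
    · intro hu
      rcases mem_ballO_succ hu with h1 | ⟨w, hw, hadj⟩
      · exact ballO_mono ω (Nat.le_succ j) (hball ▸ h1)
      · have hw' : w ∈ ballO G v ω j := hball ▸ hw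
        have he : s(w, u) ∈ touchingEdges G (ballO G v ω k) :=
          ⟨hadj.1, w, ballO_mono ω (by omega) hw', by simp⟩
        have hadj' : (openGraph G ω).Adj w u := ⟨hadj.1, (h _ he) ▸ hadj.2⟩
        exact ballO_succ_of_adj hw' hadj'

lemma levelO_eq_diff (ω : Sym2 V → Bool) (k : ℕ) :
    levelO G v ω (k + 1) = ballO G v ω (k + 1) \ ballO G v ω k := by
  ext u
  simp only [levelO, ballO, mem_setOf_eq, mem_diff]
  constructor
  · rintro ⟨hr, hd⟩; exact ⟨⟨hr, hd.le⟩, fun h => by omega⟩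
  · rintro ⟨⟨hr, hd⟩, hn⟩
    refine ⟨hr, le_antisymm hd ?_⟩
    by_contra hlt
    exact hn ⟨hr, by omega⟩

lemma levelO_zero (ω : Sym2 V → Bool) : levelO G v ω 0 = {v} := by
  ext u
  simp only [levelO, mem_setOf_eq, Set.mem_singleton_iff]
  constructor
  · rintro ⟨hr, hd⟩; exact ((hr.dist_eq_zero_iff).mp hd).symm
  · rintro rfl; exact ⟨SimpleGraph.Reachable.refl _, SimpleGraph.dist_self⟩

/-- locality of levels -/
lemma levelO_locality {ω ω' : Sym2 V → Bool} {k : ℕ}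
    (h : ∀ e ∈ touchingEdges G (ballO G v ω k), ω e = ω' e) :
    ∀ j, j ≤ k + 1 → levelO G v ω j = levelO G v ω' j := by
  intro j hj
  match j with
  | 0 => rw [levelO_zero, levelO_zero]
  | (j + 1) =>
    rw [levelO_eq_diff, levelO_eq_diff, ballO_locality h _ hj, ballO_locality h _ (by omega)]

/-- locality of escape sets -/
lemma escS_locality {ω ω' : Sym2 V → Bool} {k j : ℕ} (hj : j ≤ k + 1)
    (h : ∀ e ∈ touchingEdges G (ballO G v ω k), ω e = ω' e) :
    escS G v ω j = escS G v ω' j := by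
  unfold escS
  rw [levelO_locality h _ hj, ballO_locality h _ hj]

/-- finiteness of balls (locally finite graph) -/
lemma ballO_finite (hlf : ∀ u : V, (G.neighborSet u).Finite) (ω : Sym2 V → Bool) (k : ℕ) :
    (ballO G v ω k).Finite := by
  induction k with
  | zero => rw [ballO_zero]; exact Set.finite_singleton v
  | succ k ih =>
    have hsub : ballO G v ω (k + 1) ⊆ ballO G v ω k ∪ ⋃ x ∈ ballO G v ω k, G.neighborSet x := by
      intro u hu
      rcases mem_ballO_succ hu with h1 | ⟨w, hw, hadj⟩
      · exact Or.inl h1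
      · exact Or.inr (Set.mem_biUnion hw hadj.1)
    exact (ih.union (ih.biUnion fun x _ => hlf x)).subset hsub

/-- finiteness of touching edges of finite sets -/
lemma touchingEdges_finite (hlf : ∀ u : V, (G.neighborSet u).Finite) {A : Set V}
    (hA : A.Finite) : (touchingEdges G A).Finite := by
  have hsub : touchingEdges G A ⊆ ⋃ u ∈ A, (fun w => s(u, w)) '' G.neighborSet u := by
    rintro e ⟨he, u, hu, hue⟩
    obtain ⟨w, rfl⟩ := hue
    exact Set.mem_biUnion hu ⟨w, (SimpleGraph.mem_edgeSet _).mp he, rfl⟩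
  exact (hA.biUnion fun u _ => (hlf u).image _).subset hsub

lemma touchingEdges_mono {A B : Set V} (h : A ⊆ B) : touchingEdges G A ⊆ touchingEdges G B :=
  fun _ ⟨he, u, hu, hue⟩ => ⟨he, u, h hu, hue⟩

lemma escS_subset_touching (ω : Sym2 V → Bool) (k : ℕ) :
    escS G v ω k ⊆ touchingEdges G (ballO G v ω k) := by
  rintro e ⟨x, y, rfl, hx, _, he⟩
  exact ⟨he, x, ⟨hx.1, hx.2.le⟩, by simp⟩

/-- escape edges don't touch the previous ball -/
lemma escS_not_touching_prev (ω : Sym2 V → Bool) (k : ℕ) :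
    ∀ e ∈ escS G v ω (k + 1), e ∉ touchingEdges G (ballO G v ω k) := by
  rintro e ⟨x, y, rfl, hx, hy, he⟩ ⟨_, u, hu, hue⟩
  rw [Sym2.mem_iff] at hue
  rcases hue with rfl | rfl
  · exact absurd hu (fun h => by have := hx.2; have := h.2; omega)
  · exact hy (ballO_mono ω (Nat.le_succ k) hu)

lemma escS_pairwise_disjoint (ω : Sym2 V → Bool) {j k : ℕ} (hjk : j < k) :
    Disjoint (escS G v ω j) (escS G v ω k) := by
  rw [Set.disjoint_left]
  rintro e ⟨x, y, rfl, hx, hy, he⟩ ⟨x', y', heq, hx', hy', he'⟩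
  rw [Sym2.eq_iff] at heq
  rcases heq with ⟨rfl, rfl⟩ | ⟨rfl, rfl⟩
  · have := hx.2; have := hx'.2; omega
  · exact hy' ⟨hx.1, hx.2.le.trans hjk.le⟩

lemma escS_finite (hlf : ∀ u : V, (G.neighborSet u).Finite) (ω : Sym2 V → Bool) (k : ℕ) :
    (escS G v ω k).Finite :=
  ((touchingEdges_finite hlf (ballO_finite hlf ω k)).subset (escS_subset_touching ω k))

lemma levelO_nonempty_down {ω : Sym2 V → Bool} {j k : ℕ} (hjk : j ≤ k)
    (h : (levelO G v ω k).Nonempty) : (levelO G v ω j).Nonempty := by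
  obtain ⟨u, hr, hd⟩ := h
  obtain ⟨w, hrw, hdw⟩ := exists_dist_eq hr (show j ≤ _ by omega)
  exact ⟨w, hrw, hdw⟩

/-- escape: survival to level k+1 requires an open escape edge at level k -/
lemma escS_escape {ω : Sym2 V → Bool} {k : ℕ} (h : (levelO G v ω (k + 1)).Nonempty) :
    ∃ e ∈ escS G v ω k, ω e = true := by
  obtain ⟨u, hr, hd⟩ := h
  obtain ⟨w, hrw, hdw, hadj⟩ := exists_penultimate hr hd
  have hdw' : (openGraph G ω).dist v w = k := by
    refine le_antisymm hdw ?_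
    by_contra hlt
    push_neg at hlt
    obtain ⟨p, hp⟩ := hrw.exists_walk_length_eq_dist
    have := SimpleGraph.dist_le (p.append hadj.toWalk)
    simp only [SimpleGraph.Walk.length_append, hp, SimpleGraph.Walk.length_cons,
      SimpleGraph.Walk.length_nil] at this
    omega
  refine ⟨s(w, u), ⟨w, u, rfl, ⟨hrw, hdw'⟩, ?_, hadj.1⟩, hadj.2⟩
  rintro ⟨_, hd2⟩
  omega


/-- cylinder event -/
def cylE (t : Finset (Sym2 V)) (f : Sym2 V → Bool) : Set (Sym2 V → Bool) :=
  {ω | ∀ e ∈ t, ω e = f e}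

lemma cylE_measurable (t : Finset (Sym2 V)) (f : Sym2 V → Bool) :
    MeasurableSet (cylE t f) := by
  have : cylE t f = ⋂ e ∈ t, {ω : Sym2 V → Bool | ω e = f e} := by
    ext ω; simp [cylE]
  rw [this]
  refine MeasurableSet.biInter t.countable_toSet (fun e _ => ?_)
  have : {ω : Sym2 V → Bool | ω e = f e} = (fun ω : Sym2 V → Bool => ω e) ⁻¹' {f e} := rfl
  rw [this]
  exact (measurable_pi_apply e) (MeasurableSet.of_discrete)

lemma cylE_congr {t : Finset (Sym2 V)} {f g : Sym2 V → Bool}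
    (h : ∀ e ∈ t, f e = g e) : cylE t f = cylE t g := by
  ext ω
  constructor <;> intro hω e he
  · rw [hω e he, h e he]
  · rw [hω e he, ← h e he]

open Classical in
/-- all assignments supported on `t` -/
noncomputable def asgn (t : Finset (Sym2 V)) : Finset (Sym2 V → Bool) :=
  (Finset.univ : Finset ({x // x ∈ t} → Bool)).image
    (fun χ e => if h : e ∈ t then χ ⟨e, h⟩ else false)

open Classical in
lemma restrict_mem_asgn (t : Finset (Sym2 V)) (ω : Sym2 V → Bool) :
    (fun e => if e ∈ t then ω e else false) ∈ asgn t := by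
  refine Finset.mem_image.mpr ⟨fun x => ω x.1, Finset.mem_univ _, ?_⟩
  funext e
  by_cases h : e ∈ t <;> simp [h]

lemma asgn_eq_false {t : Finset (Sym2 V)} {τ : Sym2 V → Bool} (hτ : τ ∈ asgn t)
    {e : Sym2 V} (he : e ∉ t) : τ e = false := by
  classical
  obtain ⟨χ, -, rfl⟩ := Finset.mem_image.mp hτ
  simp [he]

lemma asgn_disjoint {t : Finset (Sym2 V)} {τ τ' : Sym2 V → Bool} (hτ : τ ∈ asgn t)
    (hτ' : τ' ∈ asgn t) (hne : τ ≠ τ') : Disjoint (cylE t τ) (cylE t τ') := by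
  rw [Set.disjoint_left]
  intro ω hω hω'
  apply hne
  funext e
  by_cases h : e ∈ t
  · rw [← hω e h, ← hω' e h]
  · rw [asgn_eq_false hτ h, asgn_eq_false hτ' h]

/-- partition of a `t`-supported event into atoms on `t` -/
lemma event_eq_biUnion_asgn {t : Finset (Sym2 V)} {A : Set (Sym2 V → Bool)}
    [DecidablePred (· ∈ A)]
    (hA : ∀ ω τ, (∀ e ∈ t, ω e = τ e) → (ω ∈ A ↔ τ ∈ A)) :
    A = ⋃ τ ∈ (asgn t).filter (· ∈ A), cylE t τ := by
  classical
  ext ω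
  simp only [Set.mem_iUnion, Finset.mem_filter, exists_prop]
  constructor
  · intro hω
    refine ⟨fun e => if e ∈ t then ω e else false, ⟨restrict_mem_asgn t ω, ?_⟩, ?_⟩
    · exact (hA ω _ (fun e he => by simp [he])).mp hω
    · intro e he; simp [he]
  · rintro ⟨τ, ⟨-, hτA⟩, hω⟩
    exact (hA ω τ hω).mpr hτA

lemma measure_eq_sum_asgn (μ : Measure (Sym2 V → Bool)) {t : Finset (Sym2 V)}
    {A : Set (Sym2 V → Bool)} [DecidablePred (· ∈ A)]
    (hA : ∀ ω τ, (∀ e ∈ t, ω e = τ e) → (ω ∈ A ↔ τ ∈ A)) :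
    μ A = ∑ τ ∈ (asgn t).filter (· ∈ A), μ (cylE t τ) := by
  conv_lhs => rw [event_eq_biUnion_asgn hA]
  refine measure_biUnion_finset ?_ (fun τ _ => cylE_measurable t τ)
  intro τ hτ τ' hτ' hne
  exact asgn_disjoint (Finset.mem_filter.mp hτ).1 (Finset.mem_filter.mp hτ').1 hne

end Aux

section Prob
attribute [local instance] Classical.propDecidable

variable {G : SimpleGraph V} {v : V}

noncomputable def TchF (G : SimpleGraph V) (v : V) (hlf : ∀ u : V, (G.neighborSet u).Finite) (ω : Sym2 V → Bool)
    (k : ℕ) : Finset (Sym2 V) :=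
  (touchingEdges_finite hlf (ballO_finite (G := G) (v := v) hlf ω k)).toFinset

noncomputable def prevT (G : SimpleGraph V) (v : V) (hlf : ∀ u : V, (G.neighborSet u).Finite) (ω : Sym2 V → Bool) :
    ℕ → Finset (Sym2 V)
  | 0 => ∅
  | (k + 1) => TchF G v hlf ω k

noncomputable def SFin (G : SimpleGraph V) (v : V) (hlf : ∀ u : V, (G.neighborSet u).Finite) (ω : Sym2 V → Bool)
    (k : ℕ) : Finset (Sym2 V) :=
  (escS_finite (G := G) (v := v) hlf ω k).toFinset

noncomputable def cnt (G : SimpleGraph V) (v : V) (K m : ℕ) (ω : Sym2 V → Bool) (k : ℕ) : ℕ :=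
  ((Finset.Ico k m).filter (fun j => (escS G v ω j).ncard ≤ K)).card

def BadE (G : SimpleGraph V) (v : V) (K m r k : ℕ) : Set (Sym2 V → Bool) :=
  {ω | (levelO G v ω m).Nonempty ∧ r ≤ cnt G v K m ω k}

variable {hlf : ∀ u : V, (G.neighborSet u).Finite}

lemma mem_TchF {ω : Sym2 V → Bool} {k : ℕ} {e : Sym2 V} :
    e ∈ TchF G v hlf ω k ↔ e ∈ touchingEdges G (ballO G v ω k) :=
  Set.Finite.mem_toFinset _

lemma prevT_zero (ω : Sym2 V → Bool) : prevT G v hlf ω 0 = ∅ := rfl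

lemma prevT_succ (ω : Sym2 V → Bool) (k : ℕ) :
    prevT G v hlf ω (k + 1) = TchF G v hlf ω k := rfl

lemma mem_prevT_succ {ω : Sym2 V → Bool} {k : ℕ} {e : Sym2 V} :
    e ∈ prevT G v hlf ω (k + 1) ↔ e ∈ touchingEdges G (ballO G v ω k) := by
  rw [prevT_succ, mem_TchF]

lemma mem_SFin {ω : Sym2 V → Bool} {k : ℕ} {e : Sym2 V} :
    e ∈ SFin G v hlf ω k ↔ e ∈ escS G v ω k :=
  Set.Finite.mem_toFinset _

lemma TchF_eq_of_ball_eq {ω ω' : Sym2 V → Bool} {k : ℕ}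
    (h : ballO G v ω k = ballO G v ω' k) : TchF G v hlf ω k = TchF G v hlf ω' k := by
  ext e; rw [mem_TchF, mem_TchF, h]

lemma cyl_prevT_ball {σ₀ ω : Sym2 V → Bool} {k : ℕ}
    (hω : ω ∈ cylE (prevT G v hlf σ₀ k) σ₀) :
    ∀ j ≤ k, ballO G v σ₀ j = ballO G v ω j := by
  match k with
  | 0 =>
    intro j hj
    interval_cases j
    rw [ballO_zero, ballO_zero]
  | (k + 1) =>
    intro j hj
    refine ballO_locality (k := k) (fun e he => ?_) j hj
    exact (hω e (mem_prevT_succ.mpr he)).symm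

lemma cyl_prevT_escS {σ₀ ω : Sym2 V → Bool} {k : ℕ}
    (hω : ω ∈ cylE (prevT G v hlf σ₀ k) σ₀) :
    ∀ j ≤ k, escS G v σ₀ j = escS G v ω j := by
  match k with
  | 0 =>
    intro j hj
    interval_cases j
    unfold escS
    rw [levelO_zero, levelO_zero, ballO_zero, ballO_zero]
  | (k + 1) =>
    intro j hj
    refine escS_locality hj (fun e he => ?_)
    exact (hω e (mem_prevT_succ.mpr he)).symm

lemma prevT_subset_TchF (σ₀ : Sym2 V → Bool) (k : ℕ) :
    prevT G v hlf σ₀ k ⊆ TchF G v hlf σ₀ k := by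
  match k with
  | 0 => rw [prevT_zero]; exact Finset.empty_subset _
  | (k + 1) =>
    intro e he
    rw [mem_TchF]
    exact touchingEdges_mono (ballO_mono σ₀ (Nat.le_succ k)) (mem_prevT_succ.mp he)

lemma SFin_subset_TchF (σ₀ : Sym2 V → Bool) (k : ℕ) :
    SFin G v hlf σ₀ k ⊆ TchF G v hlf σ₀ k := fun e he =>
  mem_TchF.mpr (escS_subset_touching σ₀ k (mem_SFin.mp he))

lemma SFin_disjoint_prevT (σ₀ : Sym2 V → Bool) (k : ℕ) :
    Disjoint (prevT G v hlf σ₀ k) (SFin G v hlf σ₀ k) := by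
  rw [Finset.disjoint_left]
  match k with
  | 0 => intro e he; rw [prevT_zero] at he; exact absurd he (Finset.notMem_empty e)
  | (k + 1) =>
    intro e he hS
    exact escS_not_touching_prev σ₀ k e (mem_SFin.mp hS) (mem_prevT_succ.mp he)

lemma TchF_subset_edgeSet (σ₀ : Sym2 V → Bool) (k : ℕ) :
    ↑(TchF G v hlf σ₀ k) ⊆ G.edgeSet := fun e he => (mem_TchF.mp he).1

lemma prevT_subset_edgeSet (σ₀ : Sym2 V → Bool) (k : ℕ) :
    ↑(prevT G v hlf σ₀ k) ⊆ G.edgeSet := fun e he =>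
  TchF_subset_edgeSet σ₀ k (prevT_subset_TchF σ₀ k he)

lemma cnt_step {K m k : ℕ} (hkm : k < m) (ω : Sym2 V → Bool) :
    cnt G v K m ω k = cnt G v K m ω (k + 1) + (if (escS G v ω k).ncard ≤ K then 1 else 0) := by
  unfold cnt
  have h1 : Finset.Ico k m = insert k (Finset.Ico (k + 1) m) := by
    ext j
    simp only [Finset.mem_Ico, Finset.mem_insert]
    omega
  rw [h1, Finset.filter_insert]
  by_cases h : (escS G v ω k).ncard ≤ K
  · rw [if_pos h, if_pos h, Finset.card_insert_of_notMem (fun hmem => by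
      have := Finset.mem_Ico.mp (Finset.filter_subset _ _ hmem); omega)]
  · rw [if_neg h, if_neg h, add_zero]

section Weights
variable {p : ℝ}

noncomputable def Wt (p : ℝ) (t : Finset (Sym2 V)) (f : Sym2 V → Bool) : ℝ :=
  p ^ (t.filter fun e => f e = true).card * (1 - p) ^ (t.filter fun e => f e = false).card

lemma Wt_nonneg (hp0 : 0 ≤ p) (hp1 : p ≤ 1) (t : Finset (Sym2 V)) (f : Sym2 V → Bool) :
    0 ≤ Wt p t f :=
  mul_nonneg (pow_nonneg hp0 _) (pow_nonneg (by linarith) _)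

lemma cylE_inter_closed {s SF : Finset (Sym2 V)} (hd : Disjoint s SF) (σ₀ : Sym2 V → Bool) :
    cylE s σ₀ ∩ cylE SF (fun _ => false) =
      cylE (s ∪ SF) (fun e => if e ∈ SF then false else σ₀ e) := by
  ext ω
  simp only [cylE, Set.mem_inter_iff, mem_setOf_eq, Finset.mem_union]
  constructor
  · rintro ⟨h1, h2⟩ e he
    by_cases hS : e ∈ SF
    · rw [if_pos hS]; exact h2 e hS
    · rw [if_neg hS]; rcases he with he | he
      · exact h1 e he
      · exact absurd he hS
  · intro h
    constructor
    · intro e he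
      have hS : e ∉ SF := Finset.disjoint_left.mp hd he
      have := h e (Or.inl he); rwa [if_neg hS] at this
    · intro e he
      have := h e (Or.inr he); rwa [if_pos he] at this

lemma Wt_union_closed {s SF : Finset (Sym2 V)} (hd : Disjoint s SF) (σ₀ : Sym2 V → Bool) :
    Wt p (s ∪ SF) (fun e => if e ∈ SF then false else σ₀ e) =
      Wt p s σ₀ * (1 - p) ^ SF.card := by
  have htrue : ((s ∪ SF).filter fun e => (if e ∈ SF then false else σ₀ e) = true) =
      s.filter fun e => σ₀ e = true := by
    ext e
    simp only [Finset.mem_filter, Finset.mem_union]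
    constructor
    · rintro ⟨he, h2⟩
      by_cases hS : e ∈ SF
      · rw [if_pos hS] at h2; exact absurd h2 (by simp)
      · rw [if_neg hS] at h2
        rcases he with he | he
        · exact ⟨he, h2⟩
        · exact absurd he hS
    · rintro ⟨he, h2⟩
      have hS : e ∉ SF := Finset.disjoint_left.mp hd he
      exact ⟨Or.inl he, by rwa [if_neg hS]⟩
  have hfalse : ((s ∪ SF).filter fun e => (if e ∈ SF then false else σ₀ e) = false) =
      (s.filter fun e => σ₀ e = false) ∪ SF := by
    ext e
    simp only [Finset.mem_filter, Finset.mem_union]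
    constructor
    · rintro ⟨he, h2⟩
      by_cases hS : e ∈ SF
      · exact Or.inr hS
      · rw [if_neg hS] at h2
        rcases he with he | he
        · exact Or.inl ⟨he, h2⟩
        · exact absurd he hS
    · rintro (⟨he, h2⟩ | hS)
      · have hS : e ∉ SF := Finset.disjoint_left.mp hd he
        exact ⟨Or.inl he, by rwa [if_neg hS]⟩
      · exact ⟨Or.inr hS, by rw [if_pos hS]⟩
  have hcard : ((s.filter fun e => σ₀ e = false) ∪ SF).card =
      (s.filter fun e => σ₀ e = false).card + SF.card := by
    refine Finset.card_union_of_disjoint ?_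
    exact Finset.disjoint_of_subset_left (Finset.filter_subset _ _) hd
  unfold Wt
  rw [htrue, hfalse, hcard, pow_add]
  ring

lemma measure_cylE {p : ℝ} {μ : Measure (Sym2 V → Bool)}
    (hμ : IsBernoulli G p μ) {t : Finset (Sym2 V)} (ht : ↑t ⊆ G.edgeSet)
    (f : Sym2 V → Bool) : μ (cylE t f) = ENNReal.ofReal (Wt p t f) :=
  hμ.2 t ht f

lemma main_ind {p : ℝ} {μ : Measure (Sym2 V → Bool)} (hμ : IsBernoulli G p μ)
    (hp0 : 0 ≤ p) (hp1 : p ≤ 1) (K m : ℕ) :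
    ∀ d k r (σ₀ : Sym2 V → Bool), k + d = m →
      μ (cylE (prevT G v hlf σ₀ k) σ₀ ∩ BadE G v K m r k) ≤
        μ (cylE (prevT G v hlf σ₀ k) σ₀) * ENNReal.ofReal ((1 - (1 - p) ^ K) ^ r) := by
  classical
  have hp1' : (0:ℝ) ≤ 1 - p := by linarith
  have hq0 : (0:ℝ) ≤ 1 - (1 - p) ^ K := by
    have := pow_le_one₀ hp1' (by linarith : 1 - p ≤ 1) (n := K); linarith
  intro d
  induction d with
  | zero =>
    intro k r σ₀ hk
    have hk' : k = m := by omega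
    subst hk'
    match r with
    | 0 =>
      rw [pow_zero, ENNReal.ofReal_one, mul_one]
      exact measure_mono Set.inter_subset_left
    | (r + 1) =>
      have hempty : cylE (prevT G v hlf σ₀ k) σ₀ ∩ BadE G v K k (r + 1) k = ∅ := by
        ext ω
        simp only [Set.mem_inter_iff, Set.mem_empty_iff_false, iff_false, not_and]
        rintro - ⟨-, hcnt⟩
        have h0 : cnt G v K k ω k = 0 := by
          unfold cnt; rw [Finset.Ico_self]; simp
        omega
      rw [hempty, measure_empty]
      exact zero_le
  | succ d ih =>
    intro k r σ₀ hk
    have hkm : k < m := by omega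
    set s := prevT G v hlf σ₀ k with hs_def
    set t := TchF G v hlf σ₀ k with ht_def
    set SF := SFin G v hlf σ₀ k with hSF_def
    have hst : s ⊆ t := prevT_subset_TchF σ₀ k
    have hSFt : SF ⊆ t := SFin_subset_TchF σ₀ k
    have hdisj : Disjoint s SF := SFin_disjoint_prevT σ₀ k
    have htE : ↑t ⊆ G.edgeSet := TchF_subset_edgeSet σ₀ k
    have hsE : ↑s ⊆ G.edgeSet := prevT_subset_edgeSet σ₀ k
    have hWs : μ (cylE s σ₀) = ENNReal.ofReal (Wt p s σ₀) := measure_cylE hμ hsE σ₀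
    have hWnn : 0 ≤ Wt p s σ₀ := Wt_nonneg hp0 hp1 s σ₀
    have hAs : ∀ ω τ : Sym2 V → Bool, (∀ e ∈ t, ω e = τ e) →
        (ω ∈ cylE s σ₀ ↔ τ ∈ cylE s σ₀) := by
      intro ω τ h
      constructor <;> intro h' e he
      · rw [← h e (hst he)]; exact h' e he
      · rw [h e (hst he)]; exact h' e he
    have hsumC : μ (cylE s σ₀) =
        ∑ τ ∈ (asgn t).filter (· ∈ cylE s σ₀), μ (cylE t τ) :=
      measure_eq_sum_asgn μ hAs
    have hIH : ∀ τ ∈ (asgn t).filter (· ∈ cylE s σ₀), ∀ r' : ℕ,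
        μ (cylE t τ ∩ BadE G v K m r' (k + 1)) ≤
          μ (cylE t τ) * ENNReal.ofReal ((1 - (1 - p) ^ K) ^ r') := by
      intro τ hτ r'
      have hτs : τ ∈ cylE s σ₀ := (Finset.mem_filter.mp hτ).2
      have hball : ballO G v σ₀ k = ballO G v τ k := cyl_prevT_ball hτs k le_rfl
      have hprev : prevT G v hlf τ (k + 1) = t := by
        rw [prevT_succ]; exact (TchF_eq_of_ball_eq hball).symm
      have h := ih (k + 1) r' τ (by omega)
      rwa [hprev] at h
    -- membership facts for the canonical restriction
    have hrest : ∀ ω : Sym2 V → Bool, ω ∈ cylE s σ₀ →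
        ((fun e => if e ∈ t then ω e else false) ∈ (asgn t).filter (· ∈ cylE s σ₀) ∧
          ω ∈ cylE t (fun e => if e ∈ t then ω e else false)) := by
      intro ω hωs
      refine ⟨Finset.mem_filter.mpr ⟨restrict_mem_asgn t ω, ?_⟩, ?_⟩
      · intro e he
        simp only [hst he, if_pos]
        exact hωs e he
      · intro e he
        simp [he]
    by_cases hsparse : (escS G v σ₀ k).ncard ≤ K
    · -- sparse step
      match r with
      | 0 =>
        rw [pow_zero, ENNReal.ofReal_one, mul_one]
        exact measure_mono Set.inter_subset_left
      | (r + 1) =>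
        set GD := ((asgn t).filter (· ∈ cylE s σ₀)).filter
          (fun τ => ¬ ∀ e ∈ SF, τ e = false) with hGD_def
        have hcover : cylE s σ₀ ∩ BadE G v K m (r + 1) k ⊆
            ⋃ τ ∈ GD, (cylE t τ ∩ BadE G v K m r (k + 1)) := by
          rintro ω ⟨hωs, hlev, hcnt⟩
          obtain ⟨hmemf, hωτ⟩ := hrest ω hωs
          have hescS : escS G v σ₀ k = escS G v ω k := cyl_prevT_escS hωs k le_rfl
          have hlev' : (levelO G v ω (k + 1)).Nonempty :=
            levelO_nonempty_down (by omega) hlev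
          obtain ⟨e, heS, heop⟩ := escS_escape hlev'
          have heS' : e ∈ SF := mem_SFin.mpr (hescS ▸ heS)
          refine Set.mem_biUnion (Finset.mem_filter.mpr ⟨hmemf, ?_⟩) ⟨hωτ, hlev, ?_⟩
          · intro hall
            have h1 := hall e heS'
            rw [if_pos (hSFt heS'), heop] at h1
            exact absurd h1 (by simp)
          · have hstep := cnt_step (G := G) (v := v) (K := K) hkm ω
            rw [← hescS, if_pos hsparse] at hstep
            omega
        have hsum1 : μ (cylE s σ₀ ∩ BadE G v K m (r + 1) k) ≤
            ∑ τ ∈ GD, μ (cylE t τ ∩ BadE G v K m r (k + 1)) :=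
          (measure_mono hcover).trans (measure_biUnion_finset_le _ _)
        have hsum2 : ∑ τ ∈ GD, μ (cylE t τ ∩ BadE G v K m r (k + 1)) ≤
            (∑ τ ∈ GD, μ (cylE t τ)) * ENNReal.ofReal ((1 - (1 - p) ^ K) ^ r) := by
          rw [Finset.sum_mul]
          refine Finset.sum_le_sum (fun τ hτ => ?_)
          exact hIH τ (Finset.mem_filter.mp hτ).1 r
        -- evaluate the sum over GD
        have hAc : ∀ ω τ : Sym2 V → Bool, (∀ e ∈ t, ω e = τ e) →
            (ω ∈ cylE s σ₀ ∩ cylE SF (fun _ => false) ↔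
              τ ∈ cylE s σ₀ ∩ cylE SF (fun _ => false)) := by
          intro ω τ h
          have h2 : ∀ e ∈ SF, ω e = τ e := fun e he => h e (hSFt he)
          constructor <;> rintro ⟨h1', h2'⟩
          · exact ⟨(hAs ω τ h).mp h1', fun e he => by rw [← h2 e he]; exact h2' e he⟩
          · exact ⟨(hAs ω τ h).mpr h1', fun e he => by rw [h2 e he]; exact h2' e he⟩
        have hCceq : ((asgn t).filter (· ∈ cylE s σ₀)).filter
              (fun τ => ∀ e ∈ SF, τ e = false) =
            (asgn t).filter (· ∈ cylE s σ₀ ∩ cylE SF (fun _ => false)) := by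
          ext τ
          simp only [Finset.mem_filter, Set.mem_inter_iff, and_assoc]
          tauto
        have hsUSF : ↑(s ∪ SF) ⊆ G.edgeSet := by
          intro e he
          rcases Finset.mem_union.mp (Finset.mem_coe.mp he) with h | h
          · exact hsE h
          · exact htE (hSFt h)
        have hCcval : μ (cylE s σ₀ ∩ cylE SF (fun _ => false)) =
            ENNReal.ofReal (Wt p s σ₀ * (1 - p) ^ SF.card) := by
          rw [cylE_inter_closed hdisj, measure_cylE hμ hsUSF, Wt_union_closed hdisj]
        have hsplit := Finset.sum_filter_add_sum_filter_not
          ((asgn t).filter (· ∈ cylE s σ₀)) (fun τ => ∀ e ∈ SF, τ e = false)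
          (fun τ => μ (cylE t τ))
        have hsumCc : μ (cylE s σ₀ ∩ cylE SF (fun _ => false)) =
            ∑ τ ∈ ((asgn t).filter (· ∈ cylE s σ₀)).filter
              (fun τ => ∀ e ∈ SF, τ e = false), μ (cylE t τ) := by
          rw [hCceq]; exact measure_eq_sum_asgn μ hAc
        have hGDsum : (∑ τ ∈ GD, μ (cylE t τ)) +
            ENNReal.ofReal (Wt p s σ₀ * (1 - p) ^ SF.card) = ENNReal.ofReal (Wt p s σ₀) := by
          rw [← hCcval, hsumCc, ← hWs, hsumC, add_comm]
          exact hsplit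
        have hscK : SF.card ≤ K := by
          rwa [hSF_def, SFin, ← Set.ncard_eq_toFinset_card _ (escS_finite hlf σ₀ k)]
        have hGDle : (∑ τ ∈ GD, μ (cylE t τ)) ≤
            ENNReal.ofReal (Wt p s σ₀ * (1 - (1 - p) ^ K)) := by
          have hfin : ENNReal.ofReal (Wt p s σ₀ * (1 - p) ^ SF.card) ≠ ⊤ :=
            ENNReal.ofReal_ne_top
          rw [← ENNReal.add_le_add_iff_right hfin, hGDsum, ← ENNReal.ofReal_add
            (mul_nonneg hWnn hq0) (mul_nonneg hWnn (pow_nonneg hp1' _))]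
          refine ENNReal.ofReal_le_ofReal ?_
          have hpow : (1 - p) ^ K ≤ (1 - p) ^ SF.card :=
            pow_le_pow_of_le_one hp1' (by linarith) hscK
          nlinarith [hWnn]
        calc μ (cylE s σ₀ ∩ BadE G v K m (r + 1) k)
            ≤ (∑ τ ∈ GD, μ (cylE t τ)) * ENNReal.ofReal ((1 - (1 - p) ^ K) ^ r) :=
              hsum1.trans hsum2
          _ ≤ ENNReal.ofReal (Wt p s σ₀ * (1 - (1 - p) ^ K)) *
              ENNReal.ofReal ((1 - (1 - p) ^ K) ^ r) :=
              mul_le_mul_left hGDle _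
          _ = μ (cylE s σ₀) * ENNReal.ofReal ((1 - (1 - p) ^ K) ^ (r + 1)) := by
              rw [← ENNReal.ofReal_mul (mul_nonneg hWnn hq0), hWs,
                ← ENNReal.ofReal_mul hWnn]
              ring_nf
    · -- dense step
      have hcover : cylE s σ₀ ∩ BadE G v K m r k ⊆
          ⋃ τ ∈ (asgn t).filter (· ∈ cylE s σ₀),
            (cylE t τ ∩ BadE G v K m r (k + 1)) := by
        rintro ω ⟨hωs, hlev, hcnt⟩
        obtain ⟨hmemf, hωτ⟩ := hrest ω hωs
        have hescS : escS G v σ₀ k = escS G v ω k := cyl_prevT_escS hωs k le_rfl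
        refine Set.mem_biUnion hmemf ⟨hωτ, hlev, ?_⟩
        have hstep := cnt_step (G := G) (v := v) (K := K) hkm ω
        rw [← hescS, if_neg hsparse] at hstep
        omega
      calc μ (cylE s σ₀ ∩ BadE G v K m r k)
          ≤ ∑ τ ∈ (asgn t).filter (· ∈ cylE s σ₀),
              μ (cylE t τ ∩ BadE G v K m r (k + 1)) :=
            (measure_mono hcover).trans (measure_biUnion_finset_le _ _)
        _ ≤ (∑ τ ∈ (asgn t).filter (· ∈ cylE s σ₀), μ (cylE t τ)) *
              ENNReal.ofReal ((1 - (1 - p) ^ K) ^ r) := by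
            rw [Finset.sum_mul]
            exact Finset.sum_le_sum (fun τ hτ => hIH τ hτ r)
        _ = μ (cylE s σ₀) * ENNReal.ofReal ((1 - (1 - p) ^ K) ^ r) := by
            rw [← hsumC]

lemma escS_subset_clusterEdges (ω : Sym2 V → Bool) (k : ℕ) :
    escS G v ω k ⊆ clusterEdges G ω v := by
  rintro e ⟨x, y, rfl, hx, hy, he⟩
  exact ⟨he, x, hx.1, by simp⟩

lemma sum_escS_encard (ω : Sym2 V → Bool) (m : ℕ) :
    (⋃ j ∈ Finset.range m, escS G v ω j).encard =
      ∑ j ∈ Finset.range m, (escS G v ω j).encard := by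
  induction m with
  | zero => simp
  | succ m ih =>
    rw [Finset.sum_range_succ, ← ih]
    have hd : Disjoint (⋃ j ∈ Finset.range m, escS G v ω j) (escS G v ω m) := by
      refine Set.disjoint_iUnion_left.mpr (fun j => Set.disjoint_iUnion_left.mpr (fun hj => ?_))
      exact escS_pairwise_disjoint ω (Finset.mem_range.mp hj)
    rw [← Set.encard_union_eq hd]
    congr 1
    ext e
    simp only [Set.mem_iUnion, Set.mem_union, Finset.mem_range]
    constructor
    · rintro ⟨j, hj, hje⟩
      rcases Nat.lt_or_ge j m with h | h
      · exact Or.inl ⟨j, h, hje⟩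
      · have : j = m := by omega
        exact Or.inr (this ▸ hje)
    · rintro (⟨j, hj, hje⟩ | hje)
      · exact ⟨j, by omega, hje⟩
      · exact ⟨m, by omega, hje⟩

include hlf in
lemma sum_escS_ncard_le {ω : Sym2 V → Bool} {n : ℕ}
    (hC : (clusterEdges G ω v).encard ≤ n) (m : ℕ) :
    ∑ j ∈ Finset.range m, (escS G v ω j).ncard ≤ n := by
  have hle : (⋃ j ∈ Finset.range m, escS G v ω j).encard ≤ n := by
    refine le_trans (Set.encard_mono ?_) hC
    exact Set.iUnion₂_subset (fun j _ => escS_subset_clusterEdges ω j)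
  rw [sum_escS_encard] at hle
  have heq : ∀ j : ℕ, (escS G v ω j).encard = ((escS G v ω j).ncard : ℕ∞) := by
    intro j
    rw [Set.Finite.encard_eq_coe_toFinset_card (escS_finite hlf ω j),
      Set.ncard_eq_toFinset_card _ (escS_finite hlf ω j)]
  rw [Finset.sum_congr rfl (fun j _ => heq j)] at hle
  rw [← Nat.cast_sum] at hle
  exact_mod_cast hle

include hlf in
lemma cnt_ge_of_encard_le {ω : Sym2 V → Bool} {n m K : ℕ}
    (hC : (clusterEdges G ω v).encard ≤ n) :
    m - n / (K + 1) ≤ cnt G v K m ω 0 := by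
  classical
  set D := (Finset.range m).filter (fun j => ¬ (escS G v ω j).ncard ≤ K) with hD
  have hDn : D.card * (K + 1) ≤ n := by
    calc D.card * (K + 1) = ∑ _j ∈ D, (K + 1) := by
          rw [Finset.sum_const, smul_eq_mul]
      _ ≤ ∑ j ∈ D, (escS G v ω j).ncard := by
          refine Finset.sum_le_sum (fun j hj => ?_)
          have := (Finset.mem_filter.mp hj).2
          omega
      _ ≤ ∑ j ∈ Finset.range m, (escS G v ω j).ncard :=
          Finset.sum_le_sum_of_subset (Finset.filter_subset _ _)
      _ ≤ n := sum_escS_ncard_le (hlf := hlf) hC m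
  have hDcard : D.card ≤ n / (K + 1) :=
    (Nat.le_div_iff_mul_le (Nat.succ_pos K)).mpr hDn
  have hcnt : cnt G v K m ω 0 + D.card = m := by
    unfold cnt
    rw [← Finset.range_eq_Ico]
    rw [hD]
    rw [Finset.card_filter_add_card_filter_not]
    exact Finset.card_range m
  omega

open Real in
lemma final_real {p : ℝ} (hp0 : 0 ≤ p) (hp1 : p < 1) {n m : ℕ} (hm : 1 ≤ m) (hmn : m ≤ n) :
    (1 - (1 - p) ^ (4 * n / m)) ^ (m - n / (4 * n / m + 1)) ≤
      Real.exp (-(1 / 2) * (1 - p) ^ ((4 * (n : ℝ)) / (m : ℝ)) * (m : ℝ)) := by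
  set K := 4 * n / m with hK
  set a := n / (K + 1) with ha
  set r₀ := m - a with hr₀
  have hb0 : (0:ℝ) < 1 - p := by linarith
  have hb1 : (1:ℝ) - p ≤ 1 := by linarith
  have hq0 : (0:ℝ) ≤ 1 - (1 - p) ^ K := by
    have := pow_le_one₀ hb0.le hb1 (n := K); linarith
  have hq : 1 - (1 - p) ^ K ≤ Real.exp (-(1 - p) ^ K) := by
    have := Real.add_one_le_exp (-(1 - p) ^ K); linarith
  have h1 : (1 - (1 - p) ^ K) ^ r₀ ≤ Real.exp (-(1 - p) ^ K) ^ r₀ :=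
    pow_le_pow_left₀ hq0 hq r₀
  have h2 : Real.exp (-(1 - p) ^ K) ^ r₀ = Real.exp (-(1 - p) ^ K * r₀) := by
    rw [← Real.exp_nat_mul]; ring_nf
  -- nat inequalities
  have h4nK : 4 * n < (K + 1) * m := by
    have hmod := Nat.div_add_mod (4 * n) m
    have hmodlt : (4 * n) % m < m := Nat.mod_lt _ (by omega)
    calc 4 * n = m * K + (4 * n) % m := hmod.symm
      _ < m * K + m := Nat.add_lt_add_left hmodlt _
      _ = (K + 1) * m := by ring
  have hr4 : 4 * a < m := by
    have h2' : a * (K + 1) ≤ n := ha ▸ Nat.div_mul_le_self n (K + 1)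
    have h3 : 4 * a * (K + 1) < m * (K + 1) := by
      calc 4 * a * (K + 1) = 4 * (a * (K + 1)) := by ring
        _ ≤ 4 * n := by omega
        _ < (K + 1) * m := h4nK
        _ = m * (K + 1) := by ring
    exact lt_of_mul_lt_mul_right h3 (Nat.zero_le _)
  have hm2r : m ≤ 2 * r₀ := by omega
  have hr0R : (m : ℝ) / 2 ≤ (r₀ : ℝ) := by
    have : (m : ℝ) ≤ 2 * (r₀ : ℝ) := by exact_mod_cast hm2r
    linarith
  have hKle : (K : ℝ) ≤ 4 * (n : ℝ) / (m : ℝ) := by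
    have := Nat.cast_div_le (α := ℝ) (m := 4 * n) (n := m)
    push_cast at this ⊢
    exact this
  have hBle : (1 - p) ^ ((4 * (n : ℝ)) / (m : ℝ)) ≤ (1 - p) ^ K := by
    rw [← Real.rpow_natCast (1 - p) K]
    exact Real.rpow_le_rpow_of_exponent_ge hb0 hb1 hKle
  have hexp : -(1 - p) ^ K * (r₀ : ℝ) ≤ -(1 / 2) * (1 - p) ^ ((4 * (n : ℝ)) / (m : ℝ)) * m := by
    have hB0 : (0:ℝ) ≤ (1 - p) ^ ((4 * (n : ℝ)) / (m : ℝ)) := Real.rpow_nonneg hb0.le _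
    have hm0 : (0:ℝ) ≤ (m : ℝ) := Nat.cast_nonneg m
    nlinarith [mul_le_mul hBle hr0R (by linarith) (pow_nonneg hb0.le K)]
  calc (1 - (1 - p) ^ K) ^ r₀ ≤ Real.exp (-(1 - p) ^ K * r₀) := h2 ▸ h1
    _ ≤ Real.exp (-(1 / 2) * (1 - p) ^ ((4 * (n : ℝ)) / (m : ℝ)) * m) :=
        Real.exp_le_exp.mpr hexp

end Weights

end Prob

/-- **Lemma 2.7.**  Let `G` be a locally finite graph and `v` a vertex.  Then
`P_p(R_v ≥ m and E_v ≤ n) ≤ exp (-(1/2) (1-p)^{4n/m} m)` for every `p ∈ [0,1)` and all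
integers `n ≥ m ≥ 0`, where `R_v` is the intrinsic radius of the cluster of `v`. -/
theorem skinny_cluster_radius
    {V : Type*} (G : SimpleGraph V)
    (hlf : ∀ u : V, (G.neighborSet u).Finite) (v : V)
    (p : ℝ) (hp0 : 0 ≤ p) (hp1 : p < 1)
    (n m : ℕ) (hmn : m ≤ n)
    (μ : Measure (Sym2 V → Bool)) (hμ : IsBernoulli G p μ) :
    μ {ω | (∃ u : V, (openGraph G ω).Reachable v u ∧ m ≤ (openGraph G ω).dist v u) ∧
        (clusterEdges G ω v).encard ≤ (n : ℕ∞)} ≤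
      ENNReal.ofReal
        (Real.exp (-(1 / 2) * (1 - p) ^ ((4 * (n : ℝ)) / (m : ℝ)) * (m : ℝ))) := by
  classical
  haveI : IsProbabilityMeasure μ := hμ.1
  rcases Nat.eq_zero_or_pos m with hm0 | hm1
  · subst hm0
    have : (-(1 / 2) * (1 - p) ^ ((4 * (n : ℝ)) / ((0:ℕ) : ℝ)) * ((0:ℕ) : ℝ)) = 0 := by
      simp
    rw [this, Real.exp_zero, ENNReal.ofReal_one]
    exact prob_le_one
  · set K := 4 * n / m with hK
    set r₀ := m - n / (K + 1) with hr₀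
    set σ₀ : Sym2 V → Bool := fun _ => false with hσ₀
    have hsub : {ω : Sym2 V → Bool |
          (∃ u : V, (openGraph G ω).Reachable v u ∧ m ≤ (openGraph G ω).dist v u) ∧
          (clusterEdges G ω v).encard ≤ (n : ℕ∞)} ⊆
        cylE (prevT G v hlf σ₀ 0) σ₀ ∩ BadE G v K m r₀ 0 := by
      rintro ω ⟨⟨u, hru, hdu⟩, henc⟩
      refine ⟨?_, ?_, ?_⟩
      · intro e he
        rw [prevT_zero] at he
        exact absurd he (Finset.notMem_empty e)
      · obtain ⟨w, hrw, hdw⟩ := exists_dist_eq hru hdu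
        exact ⟨w, hrw, hdw⟩
      · exact cnt_ge_of_encard_le (hlf := hlf) henc
    have hmain := main_ind (G := G) (v := v) (hlf := hlf) hμ hp0 hp1.le K m m 0 r₀ σ₀ (by omega)
    have h1 : μ {ω : Sym2 V → Bool |
          (∃ u : V, (openGraph G ω).Reachable v u ∧ m ≤ (openGraph G ω).dist v u) ∧
          (clusterEdges G ω v).encard ≤ (n : ℕ∞)} ≤
        μ (cylE (prevT G v hlf σ₀ 0) σ₀) * ENNReal.ofReal ((1 - (1 - p) ^ K) ^ r₀) :=
      (measure_mono hsub).trans hmain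
    have h2 : μ (cylE (prevT G v hlf σ₀ 0) σ₀) ≤ 1 := prob_le_one
    calc μ {ω : Sym2 V → Bool |
          (∃ u : V, (openGraph G ω).Reachable v u ∧ m ≤ (openGraph G ω).dist v u) ∧
          (clusterEdges G ω v).encard ≤ (n : ℕ∞)}
        ≤ μ (cylE (prevT G v hlf σ₀ 0) σ₀) * ENNReal.ofReal ((1 - (1 - p) ^ K) ^ r₀) := h1
      _ ≤ 1 * ENNReal.ofReal ((1 - (1 - p) ^ K) ^ r₀) := mul_le_mul_left h2 _
      _ = ENNReal.ofReal ((1 - (1 - p) ^ K) ^ r₀) := one_mul _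
      _ ≤ ENNReal.ofReal
          (Real.exp (-(1 / 2) * (1 - p) ^ ((4 * (n : ℝ)) / (m : ℝ)) * (m : ℝ))) :=
          ENNReal.ofReal_le_ofReal (final_real hp0 hp1 hm1 hmn)

end Percolation
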